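/- Let n ≥ 2 and d ≥ 1 be integers and let A_0, A_α, A_{αα} (1 ≤ α ≤ d) be real numbers. If P_Q(X,Y) = A_0 + √n Σ_{α=1}^d A_α X_α + (n − 1) Σ_{α=1}^d A_{αα} X_α² − n Σ_{α=1}^d A_{αα} Y_α² ≥ 0 for all X, Y ∈ ℝ^d with ‖Y‖² + ‖X‖²/n ≤ 1, then Q(x) = A_0 + Σ_{α=1}^d A_α s_α(x) + Σ_{α=1}^d A_{αα} s_{αα}(x) ≥ 0 for all x ∈ K_n^d. -/

import Mathlib

open scoped BigOperators

/-- `sLin n d α x = ∑ i, ξ_{i,α}` -/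
noncomputable def sLin (n d : ℕ) (α : Fin d) (x : Fin n → Fin d → ℝ) : ℝ :=
  ∑ i, x i α

/-- `sQuad n d α x = ∑_{i ≠ j} ξ_{i,α} ξ_{j,α}` (sum over ordered pairs). -/
noncomputable def sQuad (n d : ℕ) (α : Fin d) (x : Fin n → Fin d → ℝ) : ℝ :=
  ∑ i, ∑ j, if i = j then 0 else x i α * x j α

/-- `Qpoly n d A0 A B x = A0 + ∑ α A_α s_α(x) + ∑ α A_{αα} s_{αα}(x)` -/
noncomputable def Qpoly (n d : ℕ) (A0 : ℝ) (A B : Fin d → ℝ)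
    (x : Fin n → Fin d → ℝ) : ℝ :=
  A0 + ∑ α, A α * sLin n d α x + ∑ α, B α * sQuad n d α x

/-- `PQ n d A0 A B X Y = A0 + √n ∑ A_α X_α + (n-1) ∑ A_{αα} X_α² - n ∑ A_{αα} Y_α²` -/
noncomputable def PQ (n d : ℕ) (A0 : ℝ) (A B : Fin d → ℝ) (X Y : Fin d → ℝ) : ℝ :=
  A0 + Real.sqrt n * ∑ α, A α * X α
    + ((n : ℝ) - 1) * ∑ α, B α * (X α) ^ 2
    - n * ∑ α, B α * (Y α) ^ 2

lemma sQuad_eq (n d : ℕ) (α : Fin d) (x : Fin n → Fin d → ℝ) :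
    sQuad n d α x = (∑ i, x i α) ^ 2 - ∑ i, (x i α) ^ 2 := by
  have h : ∀ i j : Fin n, (if i = j then 0 else x i α * x j α)
      = x i α * x j α - (if i = j then x i α * x j α else 0) := by
    intro i j; by_cases h : i = j <;> simp [h]
  simp only [sQuad, h, Finset.sum_sub_distrib, Finset.sum_ite_eq, Finset.mem_univ,
    if_true, ← Finset.mul_sum]
  rw [← Finset.sum_mul, ← sq]
  congr 1
  exact Finset.sum_congr rfl fun i _ => (sq (x i α)).symm

theorem stmt_12 (n d : ℕ) (hn : 2 ≤ n) (hd : 1 ≤ d)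
    (A0 : ℝ) (A B : Fin d → ℝ)
    (hP : ∀ X Y : Fin d → ℝ,
      (∑ α, (Y α) ^ 2) + (∑ α, (X α) ^ 2) / n ≤ 1 →
      0 ≤ PQ n d A0 A B X Y) :
    ∀ x : Fin n → Fin d → ℝ, (∀ i, ∑ α, (x i α) ^ 2 ≤ 1) →
      0 ≤ Qpoly n d A0 A B x := by
  intro x hx
  have hn0 : (0 : ℝ) < n := by positivity
  have hsn : Real.sqrt n ≠ 0 := by positivity
  set s : Fin d → ℝ := fun α => ∑ i, x i α with hs
  set t : Fin d → ℝ := fun α => ∑ i, (x i α) ^ 2 with ht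
  have hts : ∀ α, (s α) ^ 2 ≤ n * t α := by
    intro α
    have := sq_sum_le_card_mul_sum_sq (s := Finset.univ) (f := fun i => x i α)
    simpa [hs, ht] using this
  have htnn : ∀ α, 0 ≤ t α - (s α) ^ 2 / n := by
    intro α
    have := hts α
    rw [sub_nonneg, div_le_iff₀ hn0]
    linarith
  set X : Fin d → ℝ := fun α => s α / Real.sqrt n with hX
  set Y : Fin d → ℝ := fun α => Real.sqrt ((t α - (s α) ^ 2 / n) / n) with hY
  have hX2 : ∀ α, (X α) ^ 2 = (s α) ^ 2 / n := by
    intro α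
    rw [hX, div_pow, Real.sq_sqrt hn0.le]
  have hY2 : ∀ α, (Y α) ^ 2 = (t α - (s α) ^ 2 / n) / n := by
    intro α
    exact Real.sq_sqrt (div_nonneg (htnn α) hn0.le)
  have hconstr : (∑ α, (Y α) ^ 2) + (∑ α, (X α) ^ 2) / n ≤ 1 := by
    have h1 : (∑ α, (Y α) ^ 2) + (∑ α, (X α) ^ 2) / n = (∑ α, t α) / n := by
      simp only [hY2, hX2, Finset.sum_div, ← Finset.sum_add_distrib]
      congr 1; funext α; field_simp; ring
    rw [h1, div_le_one hn0]
    have h2 : (∑ α, t α) = ∑ i, ∑ α, (x i α) ^ 2 := by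
      rw [Finset.sum_comm]
    rw [h2]
    calc (∑ i : Fin n, ∑ α, (x i α) ^ 2) ≤ ∑ i : Fin n, (1 : ℝ) :=
          Finset.sum_le_sum fun i _ => hx i
      _ = n := by simp
  have key := hP X Y hconstr
  have heq : PQ n d A0 A B X Y = Qpoly n d A0 A B x := by
    unfold PQ Qpoly
    rw [Finset.mul_sum]
    have h1 : ∀ α, Real.sqrt n * (A α * X α) = A α * sLin n d α x := by
      intro α
      rw [hX]
      field_simp [sLin, hs]
      rfl
    simp only [h1]
    have h2 : ((n : ℝ) - 1) * (∑ α, B α * (X α) ^ 2) - n * ∑ α, B α * (Y α) ^ 2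
        = ∑ α, B α * sQuad n d α x := by
      rw [Finset.mul_sum, Finset.mul_sum, ← Finset.sum_sub_distrib]
      refine Finset.sum_congr rfl fun α _ => ?_
      rw [hX2, hY2, sQuad_eq]
      have : (n:ℝ) ≠ 0 := hn0.ne'
      field_simp [hs, ht]
      ring
    linarith [h2]
  linarith [heq ▸ key]
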